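/- Let a, a* be normalized semisimple elements of L = sl₂(F) and define p ∈ F by ⟨a,a*⟩ = 1 − 2p. Then the following are equivalent: (i) p ≠ 0 and p ≠ 1; (ii) the elements a, a*, [a,a*] form a basis for the F-vector space L; (iii) the elements a, a* generate L as a Lie algebra. -/

import Mathlib

open Matrix LieAlgebra.SpecialLinear

/-- An endomorphism of a vector space is diagonalizable when its eigenspaces span. -/
def IsDiagonalizable {F M : Type*} [Field F] [AddCommGroup M] [Module F M]
    (f : Module.End F M) : Prop :=
  (⨆ μ : F, f.eigenspace μ) = ⊤

/-- The bilinear form `⟨y,z⟩ = tr(yz)/2` on `2×2` matrices (one eighth of the Killing form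
of `sl₂`). -/
noncomputable def slForm {F : Type*} [Field F]
    (y z : Matrix (Fin 2) (Fin 2) F) : F :=
  Matrix.trace (y * z) / 2

section aux
variable {F : Type*} [Field F]

theorem st6_anticomm (hchar : (2:F) ≠ 0) (x y : Matrix (Fin 2) (Fin 2) F)
    (hx : Matrix.trace x = 0) (hy : Matrix.trace y = 0) :
    x * y + y * x = (2 * slForm x y) • 1 := by
  simp only [Matrix.trace, Matrix.diag, Fin.sum_univ_two] at hx hy
  ext i j
  fin_cases i <;> fin_cases j <;>
    · simp only [slForm, Matrix.trace, Matrix.diag, Matrix.mul_apply, Fin.sum_univ_two,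
        Matrix.add_apply, Matrix.smul_apply, Matrix.one_apply, Fin.isValue, if_true, if_false, Fin.zero_eta, Fin.mk_one,
        Fin.zero_eq_one_iff, Fin.one_eq_zero_iff, Nat.succ_ne_self, ite_true, ite_false,
        smul_eq_mul, Nat.reduceEqDiff]
      field_simp
      first
      | linear_combination y 0 1 * hx + x 0 1 * hy
      | linear_combination y 1 0 * hx + x 1 0 * hy
      | linear_combination 2 * y 1 1 * hx - 2 * x 0 0 * hy
      | linear_combination 2 * y 0 0 * hx - 2 * x 1 1 * hy
      | linear_combination y 1 1 * hx - x 0 0 * hy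
      | linear_combination y 0 0 * hx - x 1 1 * hy

theorem st6_sq (hchar : (2:F) ≠ 0) (x : Matrix (Fin 2) (Fin 2) F)
    (hx : Matrix.trace x = 0) : x * x = slForm x x • 1 := by
  have h := st6_anticomm hchar x x hx hx
  have h2 : (2:F) • (x * x) = (2:F) • (slForm x x • 1) := by
    rw [two_smul, h, mul_smul]
  exact smul_right_injective _ hchar h2

theorem st6_nondeg (hchar : (2:F) ≠ 0) (n : Matrix (Fin 2) (Fin 2) F)
    (hn : Matrix.trace n = 0)
    (h : ∀ x : Matrix (Fin 2) (Fin 2) F, Matrix.trace x = 0 → Matrix.trace (n * x) = 0) :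
    n = 0 := by
  have h1 := h (Matrix.single 0 1 1)
    (Matrix.trace_single_eq_of_ne (i := 0) (j := 1) (c := (1:F)) (by decide))
  have h2 := h (Matrix.single 1 0 1)
    (Matrix.trace_single_eq_of_ne (i := 1) (j := 0) (c := (1:F)) (by decide))
  have h3 := h (Matrix.single 0 0 1 - Matrix.single 1 1 1)
    (by rw [Matrix.trace_sub, Matrix.trace_single_eq_same, Matrix.trace_single_eq_same,
      sub_self])
  simp only [Matrix.trace, Matrix.diag, Matrix.mul_apply, Fin.sum_univ_two,
    Matrix.single_apply, Matrix.sub_apply, Matrix.of_apply, and_true, and_false, if_true,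
    if_false, mul_one, mul_zero, add_zero, zero_add, mul_ite, ite_true, ite_false] at h1 h2 h3 hn
  norm_num at h1 h2 h3
  ext i j
  fin_cases i <;> fin_cases j <;> simp only [Matrix.zero_apply]
  · have : 2 * n 0 0 = 0 := by linear_combination hn + h3
    exact (mul_eq_zero.1 this).resolve_left hchar
  · exact h2
  · exact h1
  · have : 2 * n 1 1 = 0 := by linear_combination hn - h3
    exact (mul_eq_zero.1 this).resolve_left hchar

variable (A As : Matrix (Fin 2) (Fin 2) F) (s : F)

section
variable (hA : A * A = 1) (hAs : As * As = 1) (hcom : A * As + As * A = (2 * s) • 1)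
include hA hAs hcom

theorem st6_P1 : A * (As * A) = (2 * s) • A - As := by
  have hAsA : As * A = (2 * s) • 1 - A * As := eq_sub_of_add_eq' hcom
  rw [hAsA, mul_sub, Matrix.mul_smul, mul_one, ← mul_assoc, hA, one_mul]

theorem st6_P3 : As * (A * As) = (2 * s) • As - A := by
  have hAsA : As * A = (2 * s) • 1 - A * As := eq_sub_of_add_eq' hcom
  rw [← mul_assoc, hAsA, sub_mul, Matrix.smul_mul, one_mul, mul_assoc, hAs, mul_one]

theorem st6_AC : A * (A * As - As * A) = (2:F) • As - (2 * s) • A := by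
  rw [mul_sub, ← mul_assoc, hA, one_mul, st6_P1 A As s hA hAs hcom]
  module

theorem st6_CA : (A * As - As * A) * A = (2 * s) • A - (2:F) • As := by
  rw [sub_mul, mul_assoc, st6_P1 A As s hA hAs hcom, mul_assoc, hA, mul_one]
  module

theorem st6_AsC : As * (A * As - As * A) = (2 * s) • As - (2:F) • A := by
  rw [mul_sub, st6_P3 A As s hA hAs hcom, ← mul_assoc, hAs, one_mul]
  module

theorem st6_CAs : (A * As - As * A) * As = (2:F) • A - (2 * s) • As := by
  rw [sub_mul, mul_assoc, hAs, mul_one, mul_assoc, st6_P3 A As s hA hAs hcom]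
  module

theorem st6_CC : (A * As - As * A) * (A * As - As * A) = (4 * s ^ 2 - 4) • 1 := by
  rw [sub_mul, mul_assoc, mul_assoc, st6_AC A As s hA hAs hcom, st6_AsC A As s hA hAs hcom,
    mul_sub, mul_sub, Matrix.mul_smul, Matrix.mul_smul, Matrix.mul_smul, Matrix.mul_smul,
    hA, hAs]
  have h4 : (2*s) • (A * As) = (2*s) • ((2*s) • (1 : Matrix (Fin 2) (Fin 2) F))
      - (2*s) • (As * A) := by
    rw [eq_sub_iff_add_eq, ← smul_add, hcom]
  rw [h4]
  module

end

theorem st6_finrank : Module.finrank F (sl (Fin 2) F) = 3 := by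
  have h1 : Module.finrank F (Matrix (Fin 2) (Fin 2) F) = 4 := by
    simp [Module.finrank_matrix]
  have hsurj : Function.Surjective (Matrix.traceLinearMap (Fin 2) F F) := by
    intro r
    exact ⟨Matrix.single 0 0 r, by simp⟩
  have h2 := LinearMap.finrank_range_add_finrank_ker (Matrix.traceLinearMap (Fin 2) F F)
  rw [LinearMap.range_eq_top.2 hsurj, h1] at h2
  have h3 : Module.finrank F F = 1 := Module.finrank_self F
  have : Module.finrank F (LinearMap.ker (Matrix.traceLinearMap (Fin 2) F F)) = 3 := by
    rw [finrank_top] at h2; omega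
  exact this

end aux

/-- Let `a, a*` be normalized semisimple elements of `L = sl₂(F)` and define `p` by
`⟨a,a*⟩ = 1 − 2p`.  The following are equivalent:
(i) `p ≠ 0` and `p ≠ 1`;
(ii) `a, a*, [a,a*]` form a basis of the `F`-vector space `L`;
(iii) `a, a*` generate `L` as a Lie algebra. -/
theorem stmt6 (F : Type*) [Field F] [IsAlgClosed F] (hchar : (2 : F) ≠ 0)
    (a as : sl (Fin 2) F)
    (ha : IsDiagonalizable (LieAlgebra.ad F (sl (Fin 2) F) a))
    (has : IsDiagonalizable (LieAlgebra.ad F (sl (Fin 2) F) as))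
    (hna : slForm (a : Matrix (Fin 2) (Fin 2) F) (a : Matrix (Fin 2) (Fin 2) F) = 1)
    (hnas : slForm (as : Matrix (Fin 2) (Fin 2) F) (as : Matrix (Fin 2) (Fin 2) F) = 1)
    (p : F)
    (hp : slForm (a : Matrix (Fin 2) (Fin 2) F) (as : Matrix (Fin 2) (Fin 2) F) = 1 - 2 * p) :
    List.TFAE
      [ p ≠ 0 ∧ p ≠ 1,
        LinearIndependent F ![a, as, ⁅a, as⁆] ∧
          Submodule.span F (Set.range ![a, as, ⁅a, as⁆]) = ⊤,
        LieSubalgebra.lieSpan F (sl (Fin 2) F) {a, as} = ⊤ ] := by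
  have hTrA : Matrix.trace (a : Matrix (Fin 2) (Fin 2) F) = 0 := a.2
  have hTrAs : Matrix.trace (as : Matrix (Fin 2) (Fin 2) F) = 0 := as.2
  set A : Matrix (Fin 2) (Fin 2) F := (a : Matrix (Fin 2) (Fin 2) F) with hAdef
  set As : Matrix (Fin 2) (Fin 2) F := (as : Matrix (Fin 2) (Fin 2) F) with hAsdef
  have hA : A * A = 1 := by rw [st6_sq hchar A hTrA, hna, one_smul]
  have hAs : As * As = 1 := by rw [st6_sq hchar As hTrAs, hnas, one_smul]
  have hcom : A * As + As * A = (2 * (1 - 2 * p)) • 1 := by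
    rw [st6_anticomm hchar A As hTrA hTrAs, hp]
  -- trace values
  have htrAA : Matrix.trace (A * A) = 2 := by
    rw [hA, Matrix.trace_one]; norm_num
  have htrAsAs : Matrix.trace (As * As) = 2 := by
    rw [hAs, Matrix.trace_one]; norm_num
  have htrAAs : Matrix.trace (A * As) = 2 * (1 - 2 * p) := by
    have h := hp; rw [slForm] at h; field_simp at h; linear_combination h
  have htrAsA : Matrix.trace (As * A) = 2 * (1 - 2 * p) := by
    rw [Matrix.trace_mul_comm]; exact htrAAs
  -- the commutator matrix
  have hcval : (↑(⁅a, as⁆ : sl (Fin 2) F) : Matrix (Fin 2) (Fin 2) F) = A * As - As * A := rfl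
  set C : Matrix (Fin 2) (Fin 2) F := A * As - As * A with hCdef
  have hAC := st6_AC A As (1 - 2*p) hA hAs hcom
  have hCA := st6_CA A As (1 - 2*p) hA hAs hcom
  have hAsC := st6_AsC A As (1 - 2*p) hA hAs hcom
  have hCAs := st6_CAs A As (1 - 2*p) hA hAs hcom
  have hCC := st6_CC A As (1 - 2*p) hA hAs hcom
  have htrAC : Matrix.trace (A * C) = 0 := by
    rw [hCdef, hAC, Matrix.trace_sub, Matrix.trace_smul, Matrix.trace_smul, hTrA, hTrAs]
    simp
  have htrAsC : Matrix.trace (As * C) = 0 := by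
    rw [hCdef, hAsC, Matrix.trace_sub, Matrix.trace_smul, Matrix.trace_smul, hTrA, hTrAs]
    simp
  have htrCA : Matrix.trace (C * A) = 0 := by rw [Matrix.trace_mul_comm]; exact htrAC
  have htrCAs : Matrix.trace (C * As) = 0 := by rw [Matrix.trace_mul_comm]; exact htrAsC
  have htrCC : Matrix.trace (C * C) = 8 * (1 - 2*p)^2 - 8 := by
    rw [hCdef, hCC, Matrix.trace_smul, Matrix.trace_one]
    norm_num; ring
  -- bracket identities in sl
  have hb1 : ⁅a, ⁅a, as⁆⁆ = (4:F) • as - (4 * (1 - 2*p)) • a := by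
    apply Subtype.ext
    show A * C - C * A = (4:F) • As - (4 * (1 - 2*p)) • A
    rw [hCdef, hAC, hCA]
    module
  have hb2 : ⁅as, ⁅a, as⁆⁆ = (4 * (1 - 2*p)) • as - (4:F) • a := by
    apply Subtype.ext
    show As * C - C * As = (4 * (1 - 2*p)) • As - (4:F) • A
    rw [hCdef, hAsC, hCAs]
    module
  -- the span of a, as, c as a Lie subalgebra
  set Sp : Submodule F (sl (Fin 2) F) :=
    Submodule.span F {a, as, ⁅a, as⁆} with hSpdef
  have ha_mem : a ∈ Sp := Submodule.subset_span (by simp)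
  have has_mem : as ∈ Sp := Submodule.subset_span (by simp)
  have hc_mem : ⁅a, as⁆ ∈ Sp := Submodule.subset_span (by simp)
  have key : ∀ u ∈ ({a, as, ⁅a, as⁆} : Set (sl (Fin 2) F)),
      ∀ v ∈ ({a, as, ⁅a, as⁆} : Set (sl (Fin 2) F)), ⁅u, v⁆ ∈ Sp := by
    intro u hu v hv
    simp only [Set.mem_insert_iff, Set.mem_singleton_iff] at hu hv
    rcases hu with rfl | rfl | rfl <;> rcases hv with rfl | rfl | rfl
    · simp
    · exact hc_mem
    · rw [hb1]; exact Submodule.sub_mem _ (Submodule.smul_mem _ _ has_mem)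
        (Submodule.smul_mem _ _ ha_mem)
    · rw [← lie_skew]; exact Submodule.neg_mem _ hc_mem
    · simp
    · rw [hb2]; exact Submodule.sub_mem _ (Submodule.smul_mem _ _ has_mem)
        (Submodule.smul_mem _ _ ha_mem)
    · rw [← lie_skew, hb1]
      exact Submodule.neg_mem _ (Submodule.sub_mem _ (Submodule.smul_mem _ _ has_mem)
        (Submodule.smul_mem _ _ ha_mem))
    · rw [← lie_skew, hb2]
      exact Submodule.neg_mem _ (Submodule.sub_mem _ (Submodule.smul_mem _ _ has_mem)
        (Submodule.smul_mem _ _ ha_mem))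
    · simp
  have hlie : ∀ x ∈ Sp, ∀ y ∈ Sp, ⁅x, y⁆ ∈ Sp := by
    intro x hx y hy
    induction hx, hy using Submodule.span_induction₂ with
    | mem_mem u v hu hv => exact key u hu v hv
    | zero_left => simp
    | zero_right => simp
    | add_left x y z hx hy hz h1 h2 => rw [add_lie]; exact Submodule.add_mem _ h1 h2
    | add_right x y z hx hy hz h1 h2 => rw [lie_add]; exact Submodule.add_mem _ h1 h2
    | smul_left r x y hx hy h1 => rw [smul_lie]; exact Submodule.smul_mem _ _ h1
    | smul_right r x y hx hy h1 => rw [lie_smul]; exact Submodule.smul_mem _ _ h1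
  set S : LieSubalgebra F (sl (Fin 2) F) :=
    { Sp with lie_mem' := fun {x y} hx hy => hlie x hx y hy } with hSdef
  have hSpanS : LieSubalgebra.lieSpan F (sl (Fin 2) F) {a, as} ≤ S := by
    rw [LieSubalgebra.lieSpan_le]
    intro x hx
    rcases hx with rfl | hx
    · exact ha_mem
    · rcases hx with rfl
      exact has_mem
  tfae_have 1 → 2 := by
    rintro ⟨hp0, hp1⟩
    have h222 : (2:F) * 2 * 2 ≠ 0 := mul_ne_zero (mul_ne_zero hchar hchar) hchar
    have h8 : (8:F) * (p * (p - 1)) ≠ 0 := by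
      have e : (8:F) * (p * (p-1)) = (2*2*2) * (p * (p-1)) := by norm_num
      rw [e]
      exact mul_ne_zero h222 (mul_ne_zero hp0 (sub_ne_zero.2 hp1))
    have hind : LinearIndependent F ![a, as, ⁅a, as⁆] := by
      rw [Fintype.linearIndependent_iff]
      intro g hg
      rw [Fin.sum_univ_three] at hg
      simp only [Matrix.cons_val_zero, Matrix.cons_val_one, Matrix.head_cons,
        Matrix.cons_val_two, Matrix.tail_cons] at hg
      have hm : g 0 • A + g 1 • As + g 2 • C = 0 := congrArg Subtype.val hg
      have t1 := congrArg (fun m => Matrix.trace (m * A)) hm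
      have t2 := congrArg (fun m => Matrix.trace (m * As)) hm
      have t3 := congrArg (fun m => Matrix.trace (m * C)) hm
      simp only [add_mul, Matrix.smul_mul, Matrix.trace_add, Matrix.trace_smul, zero_mul,
        Matrix.trace_zero, smul_eq_mul] at t1 t2 t3
      rw [htrAA, htrAsA, htrCA] at t1
      rw [htrAAs, htrAsAs, htrCAs] at t2
      rw [htrAC, htrAsC, htrCC] at t3
      have hg2 : g 2 = 0 := by
        have hX : g 2 * ((2*2) * (8 * (p * (p - 1)))) = 0 := by linear_combination t3
        have hne : (2:F)*2 * (8 * (p * (p - 1))) ≠ 0 :=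
          mul_ne_zero (mul_ne_zero hchar hchar) h8
        exact (mul_eq_zero.1 hX).resolve_right hne
      have hg0 : g 0 = 0 := by
        have hX : g 0 * (8 * (p * (p - 1))) = 0 := by
          linear_combination (1 - 2*p) * t2 - t1
        exact (mul_eq_zero.1 hX).resolve_right h8
      have hg1 : g 1 = 0 := by
        have hX : g 1 * (8 * (p * (p - 1))) = 0 := by
          linear_combination (1 - 2*p) * t1 - t2
        exact (mul_eq_zero.1 hX).resolve_right h8
      intro i
      fin_cases i
      · exact hg0
      · exact hg1
      · exact hg2
    exact ⟨hind, hind.span_eq_top_of_card_eq_finrank (by simp [st6_finrank])⟩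
  tfae_have 2 → 3 := by
    rintro ⟨-, hspan⟩
    have hle : Submodule.span F (Set.range ![a, as, ⁅a, as⁆]) ≤
        (LieSubalgebra.lieSpan F (sl (Fin 2) F) {a, as} : Submodule F (sl (Fin 2) F)) := by
      rw [Submodule.span_le]
      rintro y ⟨i, rfl⟩
      fin_cases i
      · exact LieSubalgebra.subset_lieSpan (by simp)
      · exact LieSubalgebra.subset_lieSpan (by simp)
      · exact LieSubalgebra.lie_mem _ (LieSubalgebra.subset_lieSpan (by simp))
          (LieSubalgebra.subset_lieSpan (by simp))
    apply LieSubalgebra.toSubmodule_injective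
    rw [LieSubalgebra.top_toSubmodule, eq_top_iff, ← hspan]
    exact hle
  tfae_have 3 → 1 := by
    intro h3
    by_contra hcon
    have hps : p = 0 ∨ p = 1 := by
      rcases not_and_or.1 hcon with h | h
      · exact Or.inl (not_not.1 h)
      · exact Or.inr (not_not.1 h)
    have hs2 : (1 - 2*p)^2 = 1 := by rcases hps with rfl | rfl <;> ring
    have hSp : ∀ x : sl (Fin 2) F, x ∈ Sp := by
      intro x
      have hx : x ∈ LieSubalgebra.lieSpan F (sl (Fin 2) F) {a, as} := by rw [h3]; trivial
      exact hSpanS hx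
    set N : Matrix (Fin 2) (Fin 2) F := (1 - 2*p) • A - As with hNdef
    have htrN : Matrix.trace N = 0 := by
      rw [hNdef, Matrix.trace_sub, Matrix.trace_smul, hTrA, hTrAs]; simp
    have horth : ∀ x : sl (Fin 2) F,
        Matrix.trace (N * (x : Matrix (Fin 2) (Fin 2) F)) = 0 := by
      intro x
      have hx := hSp x
      induction hx using Submodule.span_induction with
      | mem z hz =>
        simp only [Set.mem_insert_iff, Set.mem_singleton_iff] at hz
        rcases hz with rfl | rfl | rfl
        · show Matrix.trace (N * A) = 0
          rw [hNdef, sub_mul, Matrix.smul_mul, Matrix.trace_sub, Matrix.trace_smul, htrAA,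
            htrAsA]
          simp
          ring
        · show Matrix.trace (N * As) = 0
          rw [hNdef, sub_mul, Matrix.smul_mul, Matrix.trace_sub, Matrix.trace_smul, htrAAs,
            htrAsAs]
          simp only [smul_eq_mul]
          linear_combination 2 * hs2
        · show Matrix.trace (N * C) = 0
          rw [hNdef, sub_mul, Matrix.smul_mul, Matrix.trace_sub, Matrix.trace_smul, htrAC,
            htrAsC]
          simp
      | zero => show Matrix.trace (N * (0:Matrix (Fin 2) (Fin 2) F)) = 0; simp
      | add u v hu hv h1 h2 =>
        show Matrix.trace (N * ((u : Matrix (Fin 2) (Fin 2) F) + (v : Matrix (Fin 2) (Fin 2) F))) = 0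
        rw [mul_add, Matrix.trace_add, h1, h2, add_zero]
      | smul r u hu h1 =>
        show Matrix.trace (N * (r • (u : Matrix (Fin 2) (Fin 2) F))) = 0
        rw [Matrix.mul_smul, Matrix.trace_smul, h1, smul_zero]
    have hN0 : N = 0 := st6_nondeg hchar N htrN (fun x hx => horth ⟨x, hx⟩)
    have hAsval : As = (1 - 2*p) • A := (sub_eq_zero.1 hN0).symm
    have hceq : (⁅a, as⁆ : sl (Fin 2) F) = 0 := by
      apply Subtype.ext
      show C = (0 : Matrix (Fin 2) (Fin 2) F)
      rw [hCdef, hAsval, Matrix.mul_smul, Matrix.smul_mul, sub_self]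
    have haseq : as = (1 - 2*p) • a := Subtype.ext hAsval
    have hle1 : Sp ≤ Submodule.span F {a} := by
      rw [hSpdef, Submodule.span_le]
      rintro y (rfl | rfl | rfl)
      · exact Submodule.subset_span (Set.mem_singleton _)
      · rw [haseq]
        exact Submodule.smul_mem _ _ (Submodule.subset_span (Set.mem_singleton _))
      · rw [hceq]
        exact Submodule.zero_mem _
    have htop : Submodule.span F {a} = ⊤ := top_le_iff.1 (fun x _ => hle1 (hSp x))
    have ha0 : a ≠ 0 := by
      intro h
      have hA0 : A = 0 := by rw [hAdef, h]; rfl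
      rw [hA0] at hna
      simp [slForm] at hna
    have hfr := finrank_span_singleton (K := F) ha0
    rw [htop, finrank_top, st6_finrank] at hfr
    exact absurd hfr (by norm_num)
  tfae_finish
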